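/- Let k be a perfect field of characteristic p > 0 with Frobenius σ on W(k), let R_e be the p-adic completion of the divided power hull of (X^e) in W(k)[[X]], with Frobenius lift Φ_k extending σ and sending X to X^p, and let N be a free R_e-module with a Φ_k-linear endomorphism φ_N. If ∇ and ∇̃ are two connections on N such that φ_N is horizontal with respect to each (∇∘φ_N = (φ_N ⊗ dΦ_k)∘∇ and likewise for ∇̃), then ∇ = ∇̃. -/

import Mathlib

/-- Abstract form of uniqueness of connections over `R_e` (the `p`-adic completion of the
divided power hull of `(X^e)` in `W(k)[[X]]`): let `A` be a commutative ring (playing the role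
of `R_e`), `X ∈ A`, and `Φ` a Frobenius lift with `Φ(X) = X^p`; assume `A[1/p]` is
`X`-adically separated (`hsep`, which holds for `R_e` inside `B(k)[[X]]`).  Let `φ_N` be a
`Φ`-linear endomorphism of a free module `A^r` coming from a Dieudonné crystal, so that it is
given by a matrix `Amat` invertible up to a power of `p` via `φ_N(v) = Amat · Φ(v)`.  If `∇`
and `∇̃` (given by their single components `D`, `D'` in the basis `dX` of the rank-one module
of differentials) are two connections on `A^r` for which `φ_N` is horizontal, i.e.
`D (φ_N v) = p X^{p-1} φ_N (D v)`, then `∇ = ∇̃`. -/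
theorem connection_unique_Re
    (p : ℕ) (hp : p.Prime)
    (A : Type*) [CommRing A] (X : A)
    (Φ : A →+* A) (hΦX : Φ X = X ^ p)
    (hsep : ∀ a : A, (∀ q : ℕ, ∃ (s : ℕ) (b : A), (p : A) ^ s * a = X ^ q * b) → a = 0)
    (der : A → A)
    (r : ℕ) (Amat : Matrix (Fin r) (Fin r) A)
    (hAmat : ∃ (s : ℕ) (Bmat : Matrix (Fin r) (Fin r) A),
      Amat * Bmat = (p : A) ^ s • (1 : Matrix (Fin r) (Fin r) A) ∧
      Bmat * Amat = (p : A) ^ s • (1 : Matrix (Fin r) (Fin r) A))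
    (D D' : (Fin r → A) → (Fin r → A))
    (haddD : ∀ v w, D (v + w) = D v + D w)
    (haddD' : ∀ v w, D' (v + w) = D' v + D' w)
    (hLeibD : ∀ (f : A) v, D (f • v) = f • D v + (der f) • v)
    (hLeibD' : ∀ (f : A) v, D' (f • v) = f • D' v + (der f) • v)
    (hhorD : ∀ v, D (Amat.mulVec fun i => Φ (v i)) =
      ((p : A) * X ^ (p - 1)) • (Amat.mulVec fun i => Φ (D v i)))
    (hhorD' : ∀ v, D' (Amat.mulVec fun i => Φ (v i)) =
      ((p : A) * X ^ (p - 1)) • (Amat.mulVec fun i => Φ (D' v i))) :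
    D = D' := by
  obtain ⟨t, Bmat, hAB, hBA⟩ := hAmat
  set E : (Fin r → A) → (Fin r → A) := fun v => D v - D' v with hEdef
  -- E respects scalar multiplication
  have hsmul : ∀ (f : A) (v : Fin r → A), E (f • v) = f • E v := by
    intro f v
    simp only [hEdef, hLeibD f v, hLeibD' f v, smul_sub]
    abel
  have hadd : ∀ v w, E (v + w) = E v + E w := by
    intro v w
    simp only [hEdef, haddD, haddD']
    abel
  have hEzero : E 0 = 0 := by
    have h := hsmul 0 0
    simpa using h
  have hsum : ∀ (c : Fin r → A) (u : Fin r → (Fin r → A)),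
      E (∑ k, c k • u k) = ∑ k, c k • E (u k) := by
    intro c u
    have : ∀ s : Finset (Fin r), E (∑ k ∈ s, c k • u k) = ∑ k ∈ s, c k • E (u k) := by
      intro s
      induction s using Finset.induction with
      | empty => simpa using hEzero
      | insert _ _ h ih =>
        rw [Finset.sum_insert h, Finset.sum_insert h, hadd, hsmul, ih]
    exact this _
  -- Φ of the standard basis vector
  have hΦe : ∀ j : Fin r, (fun i => Φ (((Pi.single j (1:A) : Fin r → A)) i)) = (Pi.single j (1:A) : Fin r → A) := by
    intro j
    funext i
    by_cases h : i = j <;> simp [Pi.single_apply, h]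
  have hcol : ∀ j : Fin r, Amat.mulVec ((Pi.single j (1:A) : Fin r → A)) = fun i => Amat i j := by
    intro j
    funext i
    simp [Matrix.mulVec_single]
  -- E on columns of Amat
  have hEc : ∀ j : Fin r, E (fun i => Amat i j) =
      ((p : A) * X ^ (p - 1)) • Amat.mulVec (fun i => Φ (E ((Pi.single j (1:A) : Fin r → A)) i)) := by
    intro j
    have h1 := hhorD ((Pi.single j (1:A) : Fin r → A))
    have h2 := hhorD' ((Pi.single j (1:A) : Fin r → A))
    rw [hΦe j, hcol j] at h1 h2
    have hfun : (fun i => Φ (E ((Pi.single j (1:A) : Fin r → A)) i)) =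
        (fun i => Φ (D ((Pi.single j (1:A) : Fin r → A)) i)) - fun i => Φ (D' ((Pi.single j (1:A) : Fin r → A)) i) := by
      funext i
      simp [hEdef, map_sub]
    show D _ - D' _ = _
    rw [h1, h2, hfun, Matrix.mulVec_sub, smul_sub]
  -- decomposition of basis vectors via Bmat
  have hdecomp : ∀ j : Fin r, ((p:A)^t) • ((Pi.single j (1:A) : Fin r → A)) =
      ∑ k, Bmat k j • (fun i => Amat i k) := by
    intro j
    funext i
    have h : (Amat * Bmat) i j = ((p : A) ^ t • (1 : Matrix (Fin r) (Fin r) A)) i j := by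
      rw [hAB]
    rw [Matrix.mul_apply] at h
    simp only [Matrix.smul_apply, Matrix.one_apply, smul_eq_mul] at h
    simp only [Finset.sum_apply, Pi.smul_apply, smul_eq_mul, Pi.single_apply]
    rw [← h]
    exact Finset.sum_congr rfl fun k _ => mul_comm _ _
  have h2p : 2 ≤ p := hp.two_le
  -- main induction
  have main : ∀ q : ℕ, ∃ s : ℕ, ∀ j : Fin r, ∃ w : Fin r → A,
      (p:A)^s • E ((Pi.single j (1:A) : Fin r → A)) = X^q • w := by
    intro q
    induction q with
    | zero => exact ⟨0, fun j => ⟨E ((Pi.single j (1:A) : Fin r → A)), by simp⟩⟩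
    | succ q ih =>
      obtain ⟨s, hs⟩ := ih
      refine ⟨s + t, fun j => ?_⟩
      choose w hw using hs
      refine ⟨∑ k, Bmat k j • ((((p:A) * X ^ (p - 1 + p * q - (q + 1))) •
        Amat.mulVec (fun i => Φ (w k i)))), ?_⟩
      -- p^s • E c_k = X^(q+1) • u_k
      have hqle : q + 1 ≤ p - 1 + p * q := by
        have : q ≤ p * q := Nat.le_mul_of_pos_left q (by omega)
        omega
      set d : ℕ := p - 1 + p * q - (q + 1) with hd
      have hdx : X ^ (p - 1) * X ^ (p * q) = X ^ (q + 1) * X ^ d := by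
        rw [← pow_add, ← pow_add]
        congr 1
        omega
      have hstep : ∀ k : Fin r, (p:A)^s • E (fun i => Amat i k) =
          X^(q+1) • (((p:A) * X ^ d) • Amat.mulVec (fun i => Φ (w k i))) := by
        intro k
        rw [hEc k]
        have hΦsmul : (fun i => Φ (((p:A)^s • E ((Pi.single k (1:A) : Fin r → A))) i)) =
            X^(p*q) • fun i => Φ (w k i) := by
          funext i
          rw [hw k]
          simp only [Pi.smul_apply, smul_eq_mul, map_mul, map_pow, hΦX]
          ring
        have hΦsmul' : (p:A)^s • (fun i => Φ (E ((Pi.single k (1:A) : Fin r → A)) i)) =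
            X^(p*q) • fun i => Φ (w k i) := by
          rw [← hΦsmul]
          funext i
          simp only [Pi.smul_apply, smul_eq_mul, map_mul, map_pow, map_natCast]
        rw [smul_comm, ← Matrix.mulVec_smul, hΦsmul', Matrix.mulVec_smul]
        rw [smul_smul, smul_smul]
        congr 1
        rw [mul_assoc, hdx]
        ring
      calc (p:A)^(s+t) • E ((Pi.single j (1:A) : Fin r → A))
          = (p:A)^s • ((p:A)^t • E ((Pi.single j (1:A) : Fin r → A))) := by rw [smul_smul, ← pow_add]
        _ = (p:A)^s • E ((p:A)^t • (Pi.single j (1:A) : Fin r → A)) := by rw [hsmul]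
        _ = (p:A)^s • E (∑ k, Bmat k j • (fun i => Amat i k)) := by rw [hdecomp]
        _ = (p:A)^s • ∑ k, Bmat k j • E (fun i => Amat i k) := by rw [hsum]
        _ = ∑ k, Bmat k j • ((p:A)^s • E (fun i => Amat i k)) := by
            rw [Finset.smul_sum]
            exact Finset.sum_congr rfl fun k _ => smul_comm _ _ _
        _ = ∑ k, Bmat k j •
              (X^(q+1) • (((p:A) * X ^ d) • Amat.mulVec (fun i => Φ (w k i)))) := by
            exact Finset.sum_congr rfl fun k _ => by rw [hstep k]
        _ = X^(q+1) • ∑ k, Bmat k j • (((p:A) * X ^ d) • Amat.mulVec (fun i => Φ (w k i))) := by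
            rw [Finset.smul_sum]
            exact Finset.sum_congr rfl fun k _ => smul_comm _ _ _
  -- basis vectors are killed
  have hbasis : ∀ j : Fin r, E ((Pi.single j (1:A) : Fin r → A)) = 0 := by
    intro j
    funext i
    refine hsep _ (fun q => ?_)
    obtain ⟨s, hs⟩ := main q
    obtain ⟨w, hw⟩ := hs j
    refine ⟨s, w i, ?_⟩
    have := congrFun hw i
    simpa using this
  -- conclude
  funext v
  have hv : v = ∑ k, v k • (Pi.single k (1:A) : Fin r → A) := by
    funext i
    simp [Pi.single_apply]
  have : E v = 0 := by
    rw [hv, hsum]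
    simp [hbasis]
  have hEv : D v - D' v = 0 := this
  exact sub_eq_zero.mp hEv
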